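/- Let K be any field and H ∈ K[x₁,…,xₙ]ⁿ a quadratic polynomial map with (JH)² = 0. Then for another n-tuple of indeterminates y, (JH)(y)·(JH)(x) = −(JH)(x)·(JH)(y), i.e., the evaluations of JH at distinct points anticommute. -/

import Mathlib

open MvPolynomial Matrix

private lemma stmt18_td_pderiv {K : Type*} [Field K] {n : ℕ} (p : MvPolynomial (Fin n) K)
    (j : Fin n) (hp : p.totalDegree ≤ 2) : (pderiv j p).totalDegree ≤ 1 := by
  rw [p.as_sum, map_sum]
  apply totalDegree_finsetSum_le
  intro m hm
  rw [pderiv_monomial]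
  rcases Nat.eq_zero_or_pos (m j) with h | h
  · simp [h]
  · refine (totalDegree_monomial_le _ _).trans ?_
    have hle : ∀ k ∈ Finset.univ, (Finsupp.single j 1) k ≤ m k := by
      intro k _
      rcases eq_or_ne k j with rfl | hk
      · simp only [Finsupp.single_eq_same]; exact h
      · simp [Finsupp.single_apply, Ne.symm hk]
    have hs : (m - Finsupp.single j 1).sum (fun _ e => e) + 1 ≤ m.sum fun _ e => e := by
      rw [Finsupp.sum_fintype _ _ (fun _ => rfl), Finsupp.sum_fintype _ _ (fun _ => rfl)]
      simp only [Finsupp.tsub_apply]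
      rw [Finset.sum_tsub_distrib _ hle]
      have h1 : ∑ k, (Finsupp.single j 1) k = 1 := by
        simp [Finsupp.single_apply]
      rw [h1]
      have h2 : (1:ℕ) ≤ ∑ k, m k := by
        calc 1 ≤ m j := h
        _ ≤ ∑ k, m k := Finset.single_le_sum (fun _ _ => Nat.zero_le _) (Finset.mem_univ j)
      omega
    have h3 := le_totalDegree hm
    have h4 : (m - Finsupp.single j 1).sum (fun _ e => e) ≤ 1 := by
      have : (m.sum fun _ e => e) ≤ 2 := h3.trans hp
      omega
    exact h4

private lemma stmt18_mono_classify {n : ℕ} (m : Fin n →₀ ℕ) (hs : m.sum (fun _ e => e) ≤ 1) :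
    m = 0 ∨ ∃ i, m = Finsupp.single i 1 := by
  rcases eq_or_ne m 0 with rfl | hm
  · exact Or.inl rfl
  · right
    obtain ⟨i, hi⟩ := Finsupp.support_nonempty_iff.mpr hm
    have hi' : m i ≠ 0 := Finsupp.mem_support_iff.mp hi
    rw [Finsupp.sum_fintype _ _ (fun _ => rfl)] at hs
    have hsplit : ∑ k, m k = m i + ∑ k ∈ Finset.univ.erase i, m k :=
      (Finset.add_sum_erase _ _ (Finset.mem_univ i)).symm
    have hzero : ∀ k, k ≠ i → m k = 0 := by
      intro k hk
      have : m k ≤ ∑ k' ∈ Finset.univ.erase i, m k' :=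
        Finset.single_le_sum (fun _ _ => Nat.zero_le _)
          (Finset.mem_erase.mpr ⟨hk, Finset.mem_univ k⟩)
      omega
    have hone : m i = 1 := by
      have : ∑ k ∈ Finset.univ.erase i, m k = 0 :=
        Finset.sum_eq_zero (fun k hk => hzero k (Finset.mem_erase.mp hk).1)
      omega
    exact ⟨i, Finsupp.ext fun k => by
      rcases eq_or_ne k i with rfl | hk
      · simp [hone]
      · simp [hzero k hk, Finsupp.single_apply, Ne.symm hk]⟩

private lemma stmt18_deg1_dec {K : Type*} [Field K] {n : ℕ} (p : MvPolynomial (Fin n) K)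
    (hp : p.totalDegree ≤ 1) :
    p = C (coeff 0 p) + ∑ i, C (coeff (Finsupp.single i 1) p) * X i := by
  apply MvPolynomial.ext; intro m
  rw [coeff_add, coeff_C, coeff_sum]
  simp only [coeff_C_mul, coeff_X']
  by_cases hm0 : m = 0
  · subst hm0
    have h1 : ∀ i : Fin n, Finsupp.single i 1 ≠ (0 : Fin n →₀ ℕ) := fun i => by simp
    simp [h1]
  by_cases hm1 : ∃ i, m = Finsupp.single i 1
  · obtain ⟨i, rfl⟩ := hm1
    have hne : Finsupp.single i 1 ≠ (0 : Fin n →₀ ℕ) := by simp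
    rw [if_neg (Ne.symm hne)]
    rw [Finset.sum_eq_single i]
    · simp
    · intro b _ hb
      rw [if_neg, mul_zero]
      exact fun h => hb (Finsupp.single_left_inj one_ne_zero |>.mp h)
    · intro h; exact absurd (Finset.mem_univ i) h
  · have hsup : m ∉ p.support := by
      intro hsup
      have := (le_totalDegree hsup).trans hp
      rcases stmt18_mono_classify m this with h | h
      · exact hm0 h
      · exact hm1 h
    have h0 : coeff m p = 0 := by simpa using hsup
    rw [h0, if_neg (Ne.symm hm0)]
    rw [Finset.sum_eq_zero, add_zero]
    intro i _
    rw [if_neg, mul_zero]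
    intro h; exact hm1 ⟨i, h.symm⟩

private lemma stmt18_aff {K : Type*} [Field K] {n : ℕ} (p : MvPolynomial (Fin n) K)
    (hp : p.totalDegree ≤ 1) {R : Type*} [CommRing R] [Algebra K R] (u v : Fin n → R) :
    aeval (fun i => Polynomial.C (u i) + Polynomial.X * Polynomial.C (v i)) p
      = Polynomial.C (aeval u p)
        + Polynomial.X * Polynomial.C (aeval v p - aeval (fun _ => (0:R)) p) := by
  rw [stmt18_deg1_dec p hp]
  simp only [map_add, map_sum, _root_.map_mul, aeval_C, aeval_X, Polynomial.algebraMap_apply,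
    mul_zero, map_sub, map_zero, Finset.sum_const_zero, sub_zero, add_sub_add_left_eq_sub]
  rw [Finset.mul_sum, add_assoc, ← Finset.sum_add_distrib]
  congr 1
  apply Finset.sum_congr rfl
  intro i _
  ring

private lemma stmt18_coeff1 {R : Type*} [CommRing R] (a b a' b' : R) :
    Polynomial.coeff ((Polynomial.C a + Polynomial.X * Polynomial.C b)
      * (Polynomial.C a' + Polynomial.X * Polynomial.C b')) 1 = a * b' + b * a' := by
  have h : (Polynomial.C a + Polynomial.X * Polynomial.C b)
      * (Polynomial.C a' + Polynomial.X * Polynomial.C b')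
      = Polynomial.C (a * a') + Polynomial.C (a * b' + b * a') * Polynomial.X
        + Polynomial.C (b * b') * Polynomial.X ^ 2 := by
    simp only [map_add, _root_.map_mul]
    ring
  rw [h]
  simp [Polynomial.coeff_add, Polynomial.coeff_C_mul, Polynomial.coeff_X,
    Polynomial.coeff_C, Polynomial.coeff_X_pow, mul_assoc]

private lemma stmt18_anti {K : Type*} [Field K] {n : ℕ}
    (m : Fin n → Fin n → MvPolynomial (Fin n) K)
    (hdeg : ∀ i j, (m i j).totalDegree ≤ 1)
    (hsq : (Matrix.of m) * (Matrix.of m) = 0)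
    {R : Type*} [CommRing R] [Algebra K R] (u v : Fin n → R) :
    (Matrix.of fun i j => aeval u (m i j)) *
        ((Matrix.of fun i j => aeval v (m i j))
          - (Matrix.of fun i j => aeval (fun _ => (0:R)) (m i j)))
      + ((Matrix.of fun i j => aeval v (m i j))
          - (Matrix.of fun i j => aeval (fun _ => (0:R)) (m i j))) *
        (Matrix.of fun i j => aeval u (m i j)) = 0 := by
  set ψ : MvPolynomial (Fin n) K →+* Polynomial R :=
    (aeval (fun i => Polynomial.C (u i) + Polynomial.X * Polynomial.C (v i))
      : MvPolynomial (Fin n) K →ₐ[K] Polynomial R).toRingHom with hψdef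
  have hψ : (Matrix.of m).map ψ * (Matrix.of m).map ψ = 0 := by
    rw [← Matrix.map_mul, hsq]
    ext i j
    simp
  ext i j
  have hentry : ((Matrix.of m).map ψ * (Matrix.of m).map ψ) i j = 0 := by
    rw [hψ]; rfl
  rw [Matrix.mul_apply] at hentry
  have h2 := congrArg (fun q => Polynomial.coeff q 1) hentry
  simp only [Polynomial.finset_sum_coeff, Polynomial.coeff_zero] at h2
  have h3 : ∀ t : Fin n,
      Polynomial.coeff (((Matrix.of m).map ψ i t) * ((Matrix.of m).map ψ t j)) 1
        = aeval u (m i t) * (aeval v (m t j) - aeval (fun _ => (0:R)) (m t j))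
          + (aeval v (m i t) - aeval (fun _ => (0:R)) (m i t)) * aeval u (m t j) := by
    intro t
    have e1 : (Matrix.of m).map ψ i t = Polynomial.C (aeval u (m i t))
        + Polynomial.X * Polynomial.C (aeval v (m i t) - aeval (fun _ => (0:R)) (m i t)) := by
      show ψ (m i t) = _
      rw [hψdef]; exact stmt18_aff (m i t) (hdeg i t) u v
    have e2 : (Matrix.of m).map ψ t j = Polynomial.C (aeval u (m t j))
        + Polynomial.X * Polynomial.C (aeval v (m t j) - aeval (fun _ => (0:R)) (m t j)) := by
      show ψ (m t j) = _
      rw [hψdef]; exact stmt18_aff (m t j) (hdeg t j) u v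
    rw [e1, e2, stmt18_coeff1]
  rw [Finset.sum_congr rfl (fun t _ => h3 t)] at h2
  simp only [Matrix.add_apply, Matrix.mul_apply, Matrix.sub_apply, Matrix.zero_apply,
    Matrix.of_apply]
  rw [← Finset.sum_add_distrib]
  exact h2

/-- If `H` is a quadratic polynomial map with `(JH)² = 0`, then for a second tuple of
indeterminates `y`, `(JH)(y)·(JH)(x) = −(JH)(x)·(JH)(y)`. -/
theorem stmt18 (K : Type*) [Field K] (n : ℕ) (H : Fin n → MvPolynomial (Fin n) K)
    (hdeg : ∀ i, (H i).totalDegree ≤ 2)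
    (hsq : (Matrix.of fun (i j : Fin n) => pderiv j (H i)) *
      (Matrix.of fun (i j : Fin n) => pderiv j (H i)) = 0) :
    ((Matrix.of fun (i j : Fin n) => pderiv j (H i)).map
        (MvPolynomial.aeval (fun i => (X (Sum.inr i) : MvPolynomial (Fin n ⊕ Fin n) K)))) *
      ((Matrix.of fun (i j : Fin n) => pderiv j (H i)).map
        (MvPolynomial.aeval (fun i => (X (Sum.inl i) : MvPolynomial (Fin n ⊕ Fin n) K)))) =
    -(((Matrix.of fun (i j : Fin n) => pderiv j (H i)).map
        (MvPolynomial.aeval (fun i => (X (Sum.inl i) : MvPolynomial (Fin n ⊕ Fin n) K)))) *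
      ((Matrix.of fun (i j : Fin n) => pderiv j (H i)).map
        (MvPolynomial.aeval (fun i => (X (Sum.inr i) : MvPolynomial (Fin n ⊕ Fin n) K))))) := by
  set R := MvPolynomial (Fin n ⊕ Fin n) K
  set m : Fin n → Fin n → MvPolynomial (Fin n) K := fun i j => pderiv j (H i) with hm
  have hdeg1 : ∀ i j, (m i j).totalDegree ≤ 1 :=
    fun i j => stmt18_td_pderiv (H i) j (hdeg i)
  set P : Matrix (Fin n) (Fin n) R :=
    Matrix.of fun i j => aeval (fun i => (X (Sum.inl i) : R)) (m i j) with hP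
  set N : Matrix (Fin n) (Fin n) R :=
    Matrix.of fun i j => aeval (fun i => (X (Sum.inr i) : R)) (m i j) with hN
  set Z : Matrix (Fin n) (Fin n) R :=
    Matrix.of fun i j => aeval (fun _ => (0 : R)) (m i j) with hZ
  have h1 : P * (N - Z) + (N - Z) * P = 0 :=
    stmt18_anti m hdeg1 hsq (fun i => (X (Sum.inl i) : R)) (fun i => (X (Sum.inr i) : R))
  have h2 : Z * (P - Z) + (P - Z) * Z = 0 :=
    stmt18_anti m hdeg1 hsq (fun _ => (0 : R)) (fun i => (X (Sum.inl i) : R))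
  have hZ2 : Z * Z = 0 := by
    have hmap : Z = (Matrix.of m).map
        ((aeval (fun _ => (0 : R)) : MvPolynomial (Fin n) K →ₐ[K] R).toRingHom) := by
      ext i j; rfl
    rw [hmap, ← Matrix.map_mul, hsq]
    ext i j; simp
  have e2 : P * Z + Z * P = 0 := by
    have : P * Z + Z * P = (Z * (P - Z) + (P - Z) * Z) + (Z * Z + Z * Z) := by
      simp only [mul_sub, sub_mul]; abel
    rw [this, h2, hZ2, zero_add, add_zero]
  have e1 : P * N + N * P = 0 := by
    have : P * N + N * P = (P * (N - Z) + (N - Z) * P) + (P * Z + Z * P) := by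
      simp only [mul_sub, sub_mul]; abel
    rw [this, h1, e2, zero_add]
  have hgoalP : ((Matrix.of fun (i j : Fin n) => pderiv j (H i)).map
      (MvPolynomial.aeval (fun i => (X (Sum.inl i) : MvPolynomial (Fin n ⊕ Fin n) K)))) = P := by
    ext i j; rfl
  have hgoalN : ((Matrix.of fun (i j : Fin n) => pderiv j (H i)).map
      (MvPolynomial.aeval (fun i => (X (Sum.inr i) : MvPolynomial (Fin n ⊕ Fin n) K)))) = N := by
    ext i j; rfl
  rw [hgoalP, hgoalN]
  have : N * P + P * N = 0 := by rw [add_comm]; exact e1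
  exact eq_neg_of_add_eq_zero_left this
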